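/- Let σ, σ' : ℝ → ℍ be isometries (unit-speed geodesics of the hyperbolic plane, i.e. dist(σ s, σ t) = |s − t| and likewise for σ') with σ(0) = σ'(0). Then the function t ↦ dist(σ(t), σ'(t)) is monotone nondecreasing on [0, +∞). -/

import Mathlib

open UpperHalfPlane Matrix Real Filter Topology
open scoped MatrixGroups

noncomputable section

namespace BellisFormal

/-- The point `eᵗ i` of the upper half-plane. -/
def vray (t : ℝ) : ℍ := ⟨⟨0, Real.exp t⟩, Real.exp_pos t⟩

/-- Translation length of `γ`. -/
def transLength (γ : SL(2, ℝ)) : ℝ := ⨅ z : ℍ, dist z (γ • z)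

/-- `γ` is hyperbolic: `|tr γ| > 2`. -/
def IsHyperbolic (γ : SL(2, ℝ)) : Prop :=
  2 < |Matrix.trace (γ : Matrix (Fin 2) (Fin 2) ℝ)|

/-- Axis of `γ`. -/
def Axis (γ : SL(2, ℝ)) : Set ℍ := {z : ℍ | dist z (γ • z) = transLength γ}

/-- `x` is a real fixed point of the Möbius map of `γ`. -/
def IsFixedPt (γ : SL(2, ℝ)) (x : ℝ) : Prop :=
  γ 1 0 * x ^ 2 + (γ 1 1 - γ 0 0) * x - γ 0 1 = 0

def IsAttractingFixedPt (γ : SL(2, ℝ)) (x : ℝ) : Prop :=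
  IsFixedPt γ x ∧ 1 < (γ 1 0 * x + γ 1 1) ^ 2

def IsRepellingFixedPt (γ : SL(2, ℝ)) (x : ℝ) : Prop :=
  IsFixedPt γ x ∧ (γ 1 0 * x + γ 1 1) ^ 2 < 1

instance : TopologicalSpace SL(2, ℝ) :=
  TopologicalSpace.induced (fun g => (g : Matrix (Fin 2) (Fin 2) ℝ)) inferInstance

structure IsNestedSequence (γ : ℕ → SL(2, ℝ)) (γp γm : ℕ → ℝ) (t : ℕ → ℝ) : Prop where
  hyperbolic : ∀ n, IsHyperbolic (γ n)
  discrete : DiscreteTopology (Subgroup.closure (Set.range γ) : Subgroup SL(2, ℝ))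
  attracting : ∀ n, IsAttractingFixedPt (γ n) (γp n)
  repelling : ∀ n, IsRepellingFixedPt (γ n) (γm n)
  plus_pos : ∀ n, 0 < γp n
  plus_mono : StrictMono γp
  minus_neg : ∀ n, γm n < 0
  minus_anti : StrictAnti γm
  t_pos : ∀ n, 0 < t n
  axis_meets : ∀ n, ∀ s : ℝ, 0 ≤ s → (vray s ∈ Axis (γ n) ↔ s = t n)
  len_anti : StrictAnti fun n => transLength (γ n)
  len_tendsto : Filter.Tendsto (fun n => transLength (γ n)) Filter.atTop (nhds 0)

/-- geodesic flow matrix -/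
def A (t : ℝ) : SL(2, ℝ) :=
  ⟨!![Real.exp (t / 2), 0; 0, Real.exp (-(t / 2))], by
    simp [Matrix.det_fin_two_of, ← Real.exp_add]⟩

/-- horocyclic flow matrix -/
def N (s : ℝ) : SL(2, ℝ) :=
  ⟨!![1, s; 0, 1], by simp [Matrix.det_fin_two_of]⟩

/-- the distance `d₁` between unit tangent vectors encoded as elements of `SL(2,ℝ)` -/
def d1 (g h : SL(2, ℝ)) : ℝ :=
  dist (g • vray 0) (h • vray 0) + dist (g • vray 1) (h • vray 1)

/-- product `α 0 * α 1 * ⋯ * α n` -/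
def seqProd (α : ℕ → SL(2, ℝ)) (n : ℕ) : SL(2, ℝ) :=
  ((List.range (n + 1)).map α).prod


/-- the point `a + y i` of the upper half-plane -/
def mkPt (a y : ℝ) (hy : 0 < y) : ℍ := ⟨⟨a, y⟩, hy⟩

/-- the Busemann cocycle values `r_n = B_∞(β_n⁻¹ • i, i)` -/
def busR (α : ℕ → SL(2, ℝ)) (n : ℕ) : ℝ :=
  - Real.log (((seqProd α n)⁻¹ • UpperHalfPlane.I).im)


/-- First hyperboloid coordinate. -/
def mX0 (z : ℍ) : ℝ := (z.re ^ 2 + z.im ^ 2 + 1) / (2 * z.im)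

/-- Second hyperboloid coordinate. -/
def mX1 (z : ℍ) : ℝ := z.re / z.im

/-- Third hyperboloid coordinate. -/
def mX2 (z : ℍ) : ℝ := (z.re ^ 2 + z.im ^ 2 - 1) / (2 * z.im)

lemma cosh_dist_mink (z w : ℍ) :
    Real.cosh (dist z w) = mX0 z * mX0 w - mX1 z * mX1 w - mX2 z * mX2 w := by
  rw [UpperHalfPlane.cosh_dist']
  unfold mX0 mX1 mX2
  have hz : z.im ≠ 0 := z.im_pos.ne'
  have hw : w.im ≠ 0 := w.im_pos.ne'
  field_simp
  ring

lemma mink_zero (a0 b0 c0 y0 y1 y2 : ℝ)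
    (h1 : a0 * a0 - b0 * b0 - c0 * c0 = 1)
    (h2 : a0 * y0 - b0 * y1 - c0 * y2 = 0)
    (h3 : y0 ^ 2 - y1 ^ 2 - y2 ^ 2 = 0) :
    y0 = 0 ∧ y1 = 0 ∧ y2 = 0 := by
  have key : y0 ^ 2 + (b0 * y2 - c0 * y1) ^ 2 = 0 := by
    linear_combination (a0 * y0 + b0 * y1 + c0 * y2) * h2 - (y1 ^ 2 + y2 ^ 2) * h1 -
      (a0 ^ 2 - 1) * h3
  have hy0 : y0 = 0 := by
    have h4 : y0 ^ 2 = 0 :=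
      le_antisymm (by nlinarith [sq_nonneg (b0 * y2 - c0 * y1)]) (sq_nonneg y0)
    exact (pow_eq_zero_iff two_ne_zero).mp h4
  subst hy0
  have h5 : y1 ^ 2 = 0 := le_antisymm (by nlinarith [sq_nonneg y2]) (sq_nonneg y1)
  have h6 : y2 ^ 2 = 0 := le_antisymm (by nlinarith [sq_nonneg y1]) (sq_nonneg y2)
  exact ⟨rfl, (pow_eq_zero_iff two_ne_zero).mp h5, (pow_eq_zero_iff two_ne_zero).mp h6⟩

lemma mink_negsemidef (a0 b0 c0 v0 v1 v2 : ℝ)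
    (h1 : a0 * a0 - b0 * b0 - c0 * c0 = 1)
    (h2 : a0 * v0 - b0 * v1 - c0 * v2 = 0) :
    v0 ^ 2 - v1 ^ 2 - v2 ^ 2 ≤ 0 := by
  have key : a0 ^ 2 * (v1 ^ 2 + v2 ^ 2 - v0 ^ 2) =
      (v1 ^ 2 + v2 ^ 2) + (b0 * v2 - c0 * v1) ^ 2 := by
    linear_combination (v1 ^ 2 + v2 ^ 2) * h1 - (a0 * v0 + b0 * v1 + c0 * v2) * h2
  have ha : 1 ≤ a0 ^ 2 := by nlinarith [sq_nonneg b0, sq_nonneg c0]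
  nlinarith [key, ha, sq_nonneg v1, sq_nonneg v2, sq_nonneg (b0 * v2 - c0 * v1)]

/-- Any "unit-speed" curve in the hyperboloid model is of the form
`cosh t • A + sinh t • B`. -/
lemma hyperboloid_geodesic_rep (a b c : ℝ → ℝ)
    (h : ∀ s t : ℝ, a s * a t - b s * b t - c s * c t = Real.cosh (s - t)) :
    ∃ p q r : ℝ,
      (a 0 * p - b 0 * q - c 0 * r = 0) ∧
      (p ^ 2 - q ^ 2 - r ^ 2 = -1) ∧
      ∀ t, a t = Real.cosh t * a 0 + Real.sinh t * p ∧
           b t = Real.cosh t * b 0 + Real.sinh t * q ∧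
           c t = Real.cosh t * c 0 + Real.sinh t * r := by
  have hS : Real.sinh 1 ≠ 0 := (Real.sinh_pos_iff.mpr one_pos).ne'
  obtain ⟨p, hp⟩ : ∃ p, Real.sinh 1 * p = a 1 - Real.cosh 1 * a 0 :=
    ⟨(a 1 - Real.cosh 1 * a 0) / Real.sinh 1, by field_simp⟩
  obtain ⟨q, hq⟩ : ∃ q, Real.sinh 1 * q = b 1 - Real.cosh 1 * b 0 :=
    ⟨(b 1 - Real.cosh 1 * b 0) / Real.sinh 1, by field_simp⟩
  obtain ⟨r, hr⟩ : ∃ r, Real.sinh 1 * r = c 1 - Real.cosh 1 * c 0 :=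
    ⟨(c 1 - Real.cosh 1 * c 0) / Real.sinh 1, by field_simp⟩
  have h00 : a 0 * a 0 - b 0 * b 0 - c 0 * c 0 = 1 := by simpa using h 0 0
  have h10 : a 1 * a 0 - b 1 * b 0 - c 1 * c 0 = Real.cosh 1 := by simpa using h 1 0
  have h11 : a 1 * a 1 - b 1 * b 1 - c 1 * c 1 = 1 := by simpa using h 1 1
  have hCS : Real.cosh 1 ^ 2 - Real.sinh 1 ^ 2 = 1 := Real.cosh_sq_sub_sinh_sq 1
  have hAB : a 0 * p - b 0 * q - c 0 * r = 0 := by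
    apply mul_left_cancel₀ hS
    linear_combination a 0 * hp - b 0 * hq - c 0 * hr + h10 - Real.cosh 1 * h00
  have hBB : p ^ 2 - q ^ 2 - r ^ 2 = -1 := by
    apply mul_left_cancel₀ (pow_ne_zero 2 hS)
    linear_combination (Real.sinh 1 * p + a 1 - Real.cosh 1 * a 0) * hp -
      (Real.sinh 1 * q + b 1 - Real.cosh 1 * b 0) * hq -
      (Real.sinh 1 * r + c 1 - Real.cosh 1 * c 0) * hr +
      h11 - 2 * Real.cosh 1 * h10 + Real.cosh 1 ^ 2 * h00 - hCS
  have hXB : ∀ t, a t * p - b t * q - c t * r = -Real.sinh t := by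
    intro t
    have ht1 : a t * a 1 - b t * b 1 - c t * c 1 =
        Real.cosh t * Real.cosh 1 - Real.sinh t * Real.sinh 1 := by
      rw [h t 1, Real.cosh_sub]
    have ht0 : a t * a 0 - b t * b 0 - c t * c 0 = Real.cosh t := by simpa using h t 0
    apply mul_left_cancel₀ hS
    linear_combination a t * hp - b t * hq - c t * hr + ht1 - Real.cosh 1 * ht0
  refine ⟨p, q, r, hAB, hBB, fun t => ?_⟩
  have htt : a t * a t - b t * b t - c t * c t = 1 := by simpa using h t t
  have ht0 : a t * a 0 - b t * b 0 - c t * c 0 = Real.cosh t := by simpa using h t 0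
  have hQt : Real.cosh t ^ 2 - Real.sinh t ^ 2 = 1 := Real.cosh_sq_sub_sinh_sq t
  have ho : a 0 * (a t - Real.cosh t * a 0 - Real.sinh t * p) -
      b 0 * (b t - Real.cosh t * b 0 - Real.sinh t * q) -
      c 0 * (c t - Real.cosh t * c 0 - Real.sinh t * r) = 0 := by
    linear_combination ht0 - Real.cosh t * h00 - Real.sinh t * hAB
  have hz : (a t - Real.cosh t * a 0 - Real.sinh t * p) ^ 2 -
      (b t - Real.cosh t * b 0 - Real.sinh t * q) ^ 2 -
      (c t - Real.cosh t * c 0 - Real.sinh t * r) ^ 2 = 0 := by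
    linear_combination htt - 2 * Real.cosh t * ht0 - 2 * Real.sinh t * hXB t +
      Real.cosh t ^ 2 * h00 + 2 * Real.cosh t * Real.sinh t * hAB +
      Real.sinh t ^ 2 * hBB - hQt
  obtain ⟨e1, e2, e3⟩ := mink_zero (a 0) (b 0) (c 0) _ _ _ h00 ho hz
  exact ⟨by linarith, by linarith, by linarith⟩

theorem geodesics_from_same_point_diverge
    (σ σ' : ℝ → ℍ) (hσ : Isometry σ) (hσ' : Isometry σ')
    (h0 : σ 0 = σ' 0) :
    MonotoneOn (fun t => dist (σ t) (σ' t)) (Set.Ici (0 : ℝ)) := by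
  have hrel : ∀ s t : ℝ, mX0 (σ s) * mX0 (σ t) - mX1 (σ s) * mX1 (σ t) -
      mX2 (σ s) * mX2 (σ t) = Real.cosh (s - t) := by
    intro s t
    rw [← cosh_dist_mink, hσ.dist_eq, Real.dist_eq, Real.cosh_abs]
  have hrel' : ∀ s t : ℝ, mX0 (σ' s) * mX0 (σ' t) - mX1 (σ' s) * mX1 (σ' t) -
      mX2 (σ' s) * mX2 (σ' t) = Real.cosh (s - t) := by
    intro s t
    rw [← cosh_dist_mink, hσ'.dist_eq, Real.dist_eq, Real.cosh_abs]
  obtain ⟨p, q, r, hAB, hBB, hrep⟩ :=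
    hyperboloid_geodesic_rep (fun t => mX0 (σ t)) (fun t => mX1 (σ t)) (fun t => mX2 (σ t)) hrel
  obtain ⟨p', q', r', hAB', hBB', hrep'⟩ :=
    hyperboloid_geodesic_rep (fun t => mX0 (σ' t)) (fun t => mX1 (σ' t)) (fun t => mX2 (σ' t))
      hrel'
  have ha0 : mX0 (σ' 0) = mX0 (σ 0) := by rw [h0]
  have hb0 : mX1 (σ' 0) = mX1 (σ 0) := by rw [h0]
  have hc0 : mX2 (σ' 0) = mX2 (σ 0) := by rw [h0]
  have h00 : mX0 (σ 0) * mX0 (σ 0) - mX1 (σ 0) * mX1 (σ 0) - mX2 (σ 0) * mX2 (σ 0) = 1 := by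
    simpa using hrel 0 0
  have hAB1 : mX0 (σ 0) * p - mX1 (σ 0) * q - mX2 (σ 0) * r = 0 := hAB
  have hAB2 : mX0 (σ 0) * p' - mX1 (σ 0) * q' - mX2 (σ 0) * r' = 0 := by
    have h := hAB'
    rw [ha0, hb0, hc0] at h
    exact h
  have hκ : -1 ≤ p * p' - q * q' - r * r' := by
    have hneg := mink_negsemidef (mX0 (σ 0)) (mX1 (σ 0)) (mX2 (σ 0)) (p - p') (q - q') (r - r')
      h00 (by linear_combination hAB1 - hAB2)
    nlinarith [hBB, hBB']
  have hcosh : ∀ t : ℝ, Real.cosh (dist (σ t) (σ' t)) =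
      1 + Real.sinh t ^ 2 * (1 + (p * p' - q * q' - r * r')) := by
    intro t
    have e1 : mX0 (σ t) = Real.cosh t * mX0 (σ 0) + Real.sinh t * p := (hrep t).1
    have e2 : mX1 (σ t) = Real.cosh t * mX1 (σ 0) + Real.sinh t * q := (hrep t).2.1
    have e3 : mX2 (σ t) = Real.cosh t * mX2 (σ 0) + Real.sinh t * r := (hrep t).2.2
    have f1 : mX0 (σ' t) = Real.cosh t * mX0 (σ' 0) + Real.sinh t * p' := (hrep' t).1
    have f2 : mX1 (σ' t) = Real.cosh t * mX1 (σ' 0) + Real.sinh t * q' := (hrep' t).2.1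
    have f3 : mX2 (σ' t) = Real.cosh t * mX2 (σ' 0) + Real.sinh t * r' := (hrep' t).2.2
    have hQt : Real.cosh t ^ 2 - Real.sinh t ^ 2 = 1 := Real.cosh_sq_sub_sinh_sq t
    rw [cosh_dist_mink, e1, e2, e3, f1, f2, f3, ha0, hb0, hc0]
    linear_combination Real.cosh t ^ 2 * h00 + Real.cosh t * Real.sinh t * hAB1 +
      Real.cosh t * Real.sinh t * hAB2 + hQt
  intro s hs t ht hst
  have key : Real.cosh (dist (σ s) (σ' s)) ≤ Real.cosh (dist (σ t) (σ' t)) := by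
    rw [hcosh s, hcosh t]
    have h1 : 0 ≤ Real.sinh s := Real.sinh_nonneg_iff.mpr hs
    have h2 : Real.sinh s ≤ Real.sinh t := Real.sinh_le_sinh.mpr hst
    have hs2 : Real.sinh s ^ 2 ≤ Real.sinh t ^ 2 := by nlinarith
    have hk' : (0 : ℝ) ≤ 1 + (p * p' - q * q' - r * r') := by linarith
    nlinarith [mul_le_mul_of_nonneg_right hs2 hk']
  have := Real.cosh_le_cosh.mp key
  simp only
  rwa [abs_of_nonneg dist_nonneg, abs_of_nonneg dist_nonneg] at this

end BellisFormal
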